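/- Let m, n be positive integers and let F be a binary image contained in {1,…,m} × {1,…,n} with row sums r_1,…,r_m and column sums c_1,…,c_n, such that r_1 = n and r_m = 0. Define b_i = #{j ∈ {1,…,n} : c_j ≥ i} and d_i = b_i − r_i for i = 1,…,m, and let L_h be the length of the horizontal boundary of F. Then for every integer t ≥ 0 and every choice of indices 1 ≤ i_1 < i_2 < ⋯ < i_{2t+1} ≤ m one has L_h ≥ 2n − d_{i_{2t+1}} + Σ_{s=1}^{t} (d_{i_{2s}} − d_{i_{2s+1}}) + d_{i_{2t+1}} − 2·d_{i_1}, i.e. L_h ≥ 2n − d_{i_{2t+1}} + d_{i_{2t}} − d_{i_{2t−1}} + ⋯ + d_{i_2} − 2·d_{i_1}. -/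

import Mathlib

/-- The row sum `r i` of a binary image `F`: the number of points of `F` in row `i`. -/
def rowSum (F : Finset (ℤ × ℤ)) (i : ℤ) : ℕ := (F.filter fun p => p.1 = i).card

/-- The column sum `c j` of a binary image `F`: the number of points of `F` in column `j`. -/
def colSum (F : Finset (ℤ × ℤ)) (j : ℤ) : ℕ := (F.filter fun p => p.2 = j).card

/-- The length of the horizontal boundary of `F`: the number of pairs
`((i,j),(i',j'))` with `j = j'`, `|i - i'| = 1`, `(i,j) ∈ F` and `(i',j') ∉ F`. -/
noncomputable def horizBoundaryLen (F : Finset (ℤ × ℤ)) : ℕ :=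
  Set.ncard {q : (ℤ × ℤ) × (ℤ × ℤ) |
    q.1.2 = q.2.2 ∧ |q.1.1 - q.2.1| = 1 ∧ q.1 ∈ F ∧ q.2 ∉ F}

/-- The set of "run starts" of a column set `S`. -/
def colStarts (S : Finset ℤ) : Finset ℤ := S.filter fun i => i - 1 ∉ S

/-- The deviation function of a column. -/
def colV (S : Finset ℤ) (i : ℤ) : ℤ :=
  (if i ≤ (S.card : ℤ) then 1 else 0) - (if i ∈ S then 1 else 0)

lemma mem_colStarts {S : Finset ℤ} {r : ℤ} : r ∈ colStarts S ↔ r ∈ S ∧ r - 1 ∉ S :=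
  Finset.mem_filter

lemma exists_start_between (S : Finset ℤ) {a b : ℤ} (ha : a ∉ S) (hb : b ∈ S) (hab : a < b) :
    ∃ r ∈ colStarts S, a < r ∧ r ≤ b := by
  classical
  set T := (Finset.Icc (a + 1) b).filter (fun i => Finset.Icc i b ⊆ S) with hT
  have hbT : b ∈ T := by
    refine Finset.mem_filter.2 ⟨Finset.mem_Icc.2 ⟨by omega, le_refl b⟩, ?_⟩
    intro i hi
    rw [Finset.mem_Icc] at hi
    have : i = b := by omega
    rwa [this]
  have hne : T.Nonempty := ⟨b, hbT⟩
  set r := T.min' hne with hr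
  have hrT : r ∈ T := T.min'_mem hne
  rw [Finset.mem_filter, Finset.mem_Icc] at hrT
  obtain ⟨⟨hr1, hr2⟩, hr3⟩ := hrT
  have hrS : r ∈ S := hr3 (Finset.mem_Icc.2 ⟨le_refl r, hr2⟩)
  refine ⟨r, mem_colStarts.2 ⟨hrS, ?_⟩, by omega, hr2⟩
  intro hcon
  by_cases hcase : a + 1 ≤ r - 1
  · have hmem : r - 1 ∈ T := by
      refine Finset.mem_filter.2 ⟨Finset.mem_Icc.2 ⟨hcase, by omega⟩, ?_⟩
      intro i hi
      rw [Finset.mem_Icc] at hi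
      rcases eq_or_lt_of_le hi.1 with h | h
      · rwa [← h]
      · exact hr3 (Finset.mem_Icc.2 ⟨by omega, hi.2⟩)
    have := T.min'_le _ hmem
    omega
  · have : r = a + 1 := by omega
    rw [this] at hcon
    simp only [add_sub_cancel_right] at hcon
    exact ha hcon

lemma exists_start_of_excess (S : Finset ℤ) (hpos : ∀ i ∈ S, 1 ≤ i) {b : ℤ}
    (hb : b ∈ S) (hcb : (S.card : ℤ) < b) :
    ∃ r ∈ colStarts S, 1 < r ∧ r ≤ b := by
  have hb1 : 1 ≤ b := hpos b hb
  have : ∃ a : ℤ, 1 ≤ a ∧ a < b ∧ a ∉ S := by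
    by_contra hcon
    push_neg at hcon
    have hsub : Finset.Icc (1 : ℤ) b ⊆ S := by
      intro i hi
      rw [Finset.mem_Icc] at hi
      rcases eq_or_lt_of_le hi.2 with h | h
      · rwa [h]
      · exact hcon i hi.1 h
    have hcard := Finset.card_le_card hsub
    rw [Int.card_Icc] at hcard
    have : ((b + 1 - 1).toNat : ℤ) = b + 1 - 1 := Int.toNat_of_nonneg (by omega)
    omega
  obtain ⟨a, ha1, hab, haS⟩ := this
  obtain ⟨r, hr, har, hrb⟩ := exists_start_between S haS hb hab
  exact ⟨r, hr, by omega, hrb⟩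

lemma exists_start_gt (S : Finset ℤ) (hpos : ∀ i ∈ S, 1 ≤ i) {a : ℤ}
    (h1 : 1 ≤ a) (hac : a ≤ (S.card : ℤ)) (ha : a ∉ S) :
    ∃ r ∈ colStarts S, a < r := by
  have : ∃ w ∈ S, a < w := by
    by_contra hcon
    push_neg at hcon
    have hsub : S ⊆ Finset.Icc (1 : ℤ) (a - 1) := by
      intro w hw
      rw [Finset.mem_Icc]
      have h1w := hpos w hw
      have h2w := hcon w hw
      constructor
      · omega
      · rcases eq_or_lt_of_le h2w with h | h
        · exact absurd (h ▸ hw) ha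
        · omega
    have hcard := Finset.card_le_card hsub
    rw [Int.card_Icc] at hcard
    have : ((a - 1 + 1 - 1).toNat : ℤ) = a - 1 + 1 - 1 := Int.toNat_of_nonneg (by omega)
    omega
  obtain ⟨w, hw, haw⟩ := this
  obtain ⟨r, hr, har, _⟩ := exists_start_between S ha hw haw
  exact ⟨r, hr, har⟩

lemma pair_bound (S : Finset ℤ) (hpos : ∀ i ∈ S, 1 ≤ i) {a b : ℤ} (h1 : 1 ≤ a) (hab : a < b) :
    colV S a - colV S b ≤ (((colStarts S).filter fun r => a < r ∧ r ≤ b).card : ℤ) +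
      (if a ≤ (S.card : ℤ) ∧ (S.card : ℤ) < b ∧
          0 < ((colStarts S).filter fun r => 1 < r).card then 1 else 0) := by
  have hR0 : (0:ℤ) ≤ (((colStarts S).filter fun r => a < r ∧ r ≤ b).card : ℤ) := by positivity
  have hI0 : (0:ℤ) ≤ (if a ≤ (S.card : ℤ) ∧ (S.card : ℤ) < b ∧
      0 < ((colStarts S).filter fun r => 1 < r).card then (1:ℤ) else 0) := by
    split <;> norm_num
  have hRpos : ∀ r ∈ colStarts S, a < r → r ≤ b →
      (1:ℤ) ≤ (((colStarts S).filter fun r => a < r ∧ r ≤ b).card : ℤ) := by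
    intro r hr hra hrb
    have : (0:ℕ) < ((colStarts S).filter fun r => a < r ∧ r ≤ b).card :=
      Finset.card_pos.2 ⟨r, Finset.mem_filter.2 ⟨hr, hra, hrb⟩⟩
    exact_mod_cast this
  have hE : ∀ r ∈ colStarts S, 1 < r → 0 < ((colStarts S).filter fun r => 1 < r).card := by
    intro r hr h
    exact Finset.card_pos.2 ⟨r, Finset.mem_filter.2 ⟨hr, h⟩⟩
  by_cases hbS : b ∈ S
  · by_cases haS : a ∈ S
    · by_cases hbc : b ≤ (S.card : ℤ)
      · have hac : a ≤ (S.card : ℤ) := le_of_lt (lt_of_lt_of_le hab hbc)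
        have hv : colV S a - colV S b = 0 := by
          rw [colV, colV, if_pos hac, if_pos hbc, if_pos haS, if_pos hbS]; ring
        linarith
      · by_cases hac : a ≤ (S.card : ℤ)
        · obtain ⟨r, hr, hr1, hrb⟩ := exists_start_of_excess S hpos hbS (not_le.1 hbc)
          have hEp := hE r hr hr1
          have hite : (if a ≤ (S.card : ℤ) ∧ (S.card : ℤ) < b ∧
              0 < ((colStarts S).filter fun r => 1 < r).card then (1:ℤ) else 0) = 1 :=
            if_pos ⟨hac, not_le.1 hbc, hEp⟩
          have hv : colV S a - colV S b = 1 := by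
            rw [colV, colV, if_pos hac, if_neg hbc, if_pos haS, if_pos hbS]; ring
          rw [hv, hite]; linarith
        · have hv : colV S a - colV S b = 0 := by
            rw [colV, colV, if_neg hac, if_neg hbc, if_pos haS, if_pos hbS]; ring
          linarith
    · obtain ⟨r, hr, har, hrb⟩ := exists_start_between S haS hbS hab
      have hR1 := hRpos r hr har hrb
      by_cases hbc : b ≤ (S.card : ℤ)
      · have hac : a ≤ (S.card : ℤ) := le_of_lt (lt_of_lt_of_le hab hbc)
        have hv : colV S a - colV S b = 1 := by
          rw [colV, colV, if_pos hac, if_pos hbc, if_neg haS, if_pos hbS]; ring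
        linarith
      · by_cases hac : a ≤ (S.card : ℤ)
        · have hEp := hE r hr (by omega)
          have hite : (if a ≤ (S.card : ℤ) ∧ (S.card : ℤ) < b ∧
              0 < ((colStarts S).filter fun r => 1 < r).card then (1:ℤ) else 0) = 1 :=
            if_pos ⟨hac, not_le.1 hbc, hEp⟩
          have hv : colV S a - colV S b = 2 := by
            rw [colV, colV, if_pos hac, if_neg hbc, if_neg haS, if_pos hbS]; ring
          rw [hv, hite]; linarith
        · have hv : colV S a - colV S b = 1 := by
            rw [colV, colV, if_neg hac, if_neg hbc, if_neg haS, if_pos hbS]; ring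
          linarith
  · by_cases haS : a ∈ S
    · have hv : colV S a - colV S b ≤ 0 := by
        rw [colV, colV, if_pos haS, if_neg hbS]
        split_ifs <;> norm_num
      linarith
    · by_cases hac : a ≤ (S.card : ℤ)
      · by_cases hbc : b ≤ (S.card : ℤ)
        · have hv : colV S a - colV S b = 0 := by
            rw [colV, colV, if_pos hac, if_pos hbc, if_neg haS, if_neg hbS]; ring
          linarith
        · obtain ⟨r, hr, har⟩ := exists_start_gt S hpos h1 hac haS
          have hEp := hE r hr (by omega)
          have hite : (if a ≤ (S.card : ℤ) ∧ (S.card : ℤ) < b ∧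
              0 < ((colStarts S).filter fun r => 1 < r).card then (1:ℤ) else 0) = 1 :=
            if_pos ⟨hac, not_le.1 hbc, hEp⟩
          have hv : colV S a - colV S b = 1 := by
            rw [colV, colV, if_pos hac, if_neg hbc, if_neg haS, if_neg hbS]; ring
          rw [hv, hite]; linarith
      · have hbc : ¬ b ≤ (S.card : ℤ) := by omega
        have hv : colV S a - colV S b = 0 := by
          rw [colV, colV, if_neg hac, if_neg hbc, if_neg haS, if_neg hbS]; ring
        linarith

lemma chain_bound (S : Finset ℤ) (hpos : ∀ i ∈ S, 1 ≤ i) (x : ℕ → ℤ) (hx1 : 1 ≤ x 0) :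
    ∀ t : ℕ, (∀ a b : ℕ, a < b → b ≤ 2 * t → x a < x b) →
    ∑ s ∈ Finset.range t, (colV S (x (2 * s + 1)) - colV S (x (2 * s + 2))) ≤
      (((colStarts S).filter fun r => x 0 < r ∧ r ≤ x (2 * t)).card : ℤ) +
      (if x 0 ≤ (S.card : ℤ) ∧ (S.card : ℤ) < x (2 * t) ∧
          0 < ((colStarts S).filter fun r => 1 < r).card then 1 else 0) := by
  intro t
  induction t with
  | zero =>
    intro _
    have hflag : (if x 0 ≤ (S.card : ℤ) ∧ (S.card : ℤ) < x (2 * 0) ∧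
        0 < ((colStarts S).filter fun r => 1 < r).card then (1:ℤ) else 0) = 0 := by
      apply if_neg
      rintro ⟨h1, h2, _⟩
      simp only [Nat.mul_zero] at h2
      omega
    simp [hflag]
    positivity
  | succ t ih =>
    intro hmono
    have hmono' : ∀ a b : ℕ, a < b → b ≤ 2 * t → x a < x b := by
      intro a b h1 h2; exact hmono a b h1 (by omega)
    have h01 : x 0 < x (2 * t + 1) := hmono 0 (2 * t + 1) (by omega) (by omega)
    have h12 : x (2 * t + 1) < x (2 * t + 2) := hmono (2 * t + 1) (2 * t + 2) (by omega) (by omega)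
    have h02t : x 0 ≤ x (2 * t) := by
      rcases Nat.eq_zero_or_pos t with h | h
      · subst h; exact le_refl _
      · exact le_of_lt (hmono 0 (2 * t) (by omega) (by omega))
    have ht1 : x (2 * t) < x (2 * t + 1) := hmono (2 * t) (2 * t + 1) (by omega) (by omega)
    rw [Finset.sum_range_succ]
    have hpair := pair_bound S hpos (a := x (2 * t + 1)) (b := x (2 * t + 2))
      (by omega) h12
    have hih := ih hmono'
    -- card combination
    set A1 := (colStarts S).filter fun r => x 0 < r ∧ r ≤ x (2 * t) with hA1
    set A2 := (colStarts S).filter fun r => x (2 * t + 1) < r ∧ r ≤ x (2 * t + 2) with hA2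
    set A3 := (colStarts S).filter fun r => x 0 < r ∧ r ≤ x (2 * (t + 1)) with hA3
    have hdisj : Disjoint A1 A2 := by
      rw [Finset.disjoint_left]
      intro r hr1 hr2
      rw [hA1, Finset.mem_filter] at hr1
      rw [hA2, Finset.mem_filter] at hr2
      omega
    have hsub : A1 ∪ A2 ⊆ A3 := by
      intro r hr
      rcases Finset.mem_union.1 hr with h | h
      · rw [hA1, Finset.mem_filter] at h
        rw [hA3, Finset.mem_filter]
        have : 2 * (t + 1) = 2 * t + 2 := by ring
        rw [this]
        exact ⟨h.1, h.2.1, by omega⟩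
      · rw [hA2, Finset.mem_filter] at h
        rw [hA3, Finset.mem_filter]
        have : 2 * (t + 1) = 2 * t + 2 := by ring
        rw [this]
        exact ⟨h.1, by omega, by omega⟩
    have hcards : A1.card + A2.card ≤ A3.card := by
      rw [← Finset.card_union_of_disjoint hdisj]
      exact Finset.card_le_card hsub
    have hcards' : (A1.card : ℤ) + (A2.card : ℤ) ≤ (A3.card : ℤ) := by exact_mod_cast hcards
    -- flag combination
    have h2t2 : 2 * (t + 1) = 2 * t + 2 := by ring
    by_cases hP : x (2 * t + 1) ≤ (S.card : ℤ) ∧ (S.card : ℤ) < x (2 * t + 2) ∧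
        0 < ((colStarts S).filter fun r => 1 < r).card
    · have hfp : (if x (2*t+1) ≤ (S.card : ℤ) ∧ (S.card : ℤ) < x (2*t+2) ∧
          0 < ((colStarts S).filter fun r => 1 < r).card then (1:ℤ) else 0) = 1 := if_pos hP
      have hft : (if x 0 ≤ (S.card : ℤ) ∧ (S.card : ℤ) < x (2 * t) ∧
          0 < ((colStarts S).filter fun r => 1 < r).card then (1:ℤ) else 0) = 0 := by
        apply if_neg
        rintro ⟨_, h2, _⟩
        omega
      have hfnew : (if x 0 ≤ (S.card : ℤ) ∧ (S.card : ℤ) < x (2 * (t+1)) ∧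
          0 < ((colStarts S).filter fun r => 1 < r).card then (1:ℤ) else 0) = 1 := by
        apply if_pos
        rw [h2t2]
        exact ⟨by omega, hP.2.1, hP.2.2⟩
      rw [hfnew]
      rw [hfp] at hpair
      rw [hft] at hih
      linarith
    · have hfp : (if x (2*t+1) ≤ (S.card : ℤ) ∧ (S.card : ℤ) < x (2*t+2) ∧
          0 < ((colStarts S).filter fun r => 1 < r).card then (1:ℤ) else 0) = 0 := if_neg hP
      rw [hfp] at hpair
      by_cases hQ : x 0 ≤ (S.card : ℤ) ∧ (S.card : ℤ) < x (2 * t) ∧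
          0 < ((colStarts S).filter fun r => 1 < r).card
      · have hft : (if x 0 ≤ (S.card : ℤ) ∧ (S.card : ℤ) < x (2 * t) ∧
            0 < ((colStarts S).filter fun r => 1 < r).card then (1:ℤ) else 0) = 1 := if_pos hQ
        have hfnew : (if x 0 ≤ (S.card : ℤ) ∧ (S.card : ℤ) < x (2 * (t+1)) ∧
            0 < ((colStarts S).filter fun r => 1 < r).card then (1:ℤ) else 0) = 1 := by
          apply if_pos
          rw [h2t2]
          exact ⟨hQ.1, by omega, hQ.2.2⟩
        rw [hfnew]
        rw [hft] at hih
        linarith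
      · have hft : (if x 0 ≤ (S.card : ℤ) ∧ (S.card : ℤ) < x (2 * t) ∧
            0 < ((colStarts S).filter fun r => 1 < r).card then (1:ℤ) else 0) = 0 := if_neg hQ
        have hfnew : (0:ℤ) ≤ (if x 0 ≤ (S.card : ℤ) ∧ (S.card : ℤ) < x (2 * (t+1)) ∧
            0 < ((colStarts S).filter fun r => 1 < r).card then (1:ℤ) else 0) := by
          split <;> norm_num
        rw [hft] at hih
        linarith

lemma col_main (S : Finset ℤ) (hpos : ∀ i ∈ S, 1 ≤ i) (hS1 : (1:ℤ) ∈ S)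
    (x : ℕ → ℤ) (t : ℕ) (hx1 : 1 ≤ x 0)
    (hmono : ∀ a b : ℕ, a < b → b ≤ 2 * t → x a < x b) :
    2 - 2 * colV S (x 0) +
      ∑ s ∈ Finset.range t, (colV S (x (2 * s + 1)) - colV S (x (2 * s + 2))) ≤
    2 * ((colStarts S).card : ℤ) := by
  classical
  set Af := (colStarts S).filter (fun r => 1 < r ∧ r ≤ x 0) with hAf
  set Bf := (colStarts S).filter (fun r => x 0 < r) with hBf
  have h1s : (1:ℤ) ∈ colStarts S := by
    refine mem_colStarts.2 ⟨hS1, ?_⟩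
    intro h
    have := hpos _ h
    omega
  have hkey : 1 + Af.card + Bf.card ≤ (colStarts S).card := by
    have hsub : insert (1:ℤ) (Af ∪ Bf) ⊆ colStarts S := by
      intro r hr
      rcases Finset.mem_insert.1 hr with h | h
      · rwa [h]
      · rcases Finset.mem_union.1 h with h | h
        · exact (Finset.mem_filter.1 h).1
        · exact (Finset.mem_filter.1 h).1
    have hnotmem : (1:ℤ) ∉ Af ∪ Bf := by
      intro h
      rcases Finset.mem_union.1 h with h | h
      · have := (Finset.mem_filter.1 h).2; omega
      · have := (Finset.mem_filter.1 h).2; omega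
    have hdisj : Disjoint Af Bf := by
      rw [Finset.disjoint_left]
      intro r h1 h2
      have := (Finset.mem_filter.1 h1).2
      have := (Finset.mem_filter.1 h2).2
      omega
    calc 1 + Af.card + Bf.card = (insert (1:ℤ) (Af ∪ Bf)).card := by
          rw [Finset.card_insert_of_notMem hnotmem, Finset.card_union_of_disjoint hdisj]
          ring
      _ ≤ (colStarts S).card := Finset.card_le_card hsub
  have hkey' : 1 + (Af.card : ℤ) + (Bf.card : ℤ) ≤ ((colStarts S).card : ℤ) := by
    exact_mod_cast hkey
  have hchain := chain_bound S hpos x hx1 t hmono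
  have hCB : (((colStarts S).filter fun r => x 0 < r ∧ r ≤ x (2 * t)).card : ℤ) ≤ (Bf.card : ℤ) := by
    have : ((colStarts S).filter fun r => x 0 < r ∧ r ≤ x (2 * t)) ⊆ Bf := by
      intro r hr
      rw [Finset.mem_filter] at hr
      exact Finset.mem_filter.2 ⟨hr.1, hr.2.1⟩
    exact_mod_cast Finset.card_le_card this
  by_cases hvx : x 0 ∈ S ∧ (S.card : ℤ) < x 0
  · have hv : colV S (x 0) = -1 := by
      rw [colV, if_neg (not_le.2 hvx.2), if_pos hvx.1]; ring
    have hflag : (if x 0 ≤ (S.card : ℤ) ∧ (S.card : ℤ) < x (2 * t) ∧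
        0 < ((colStarts S).filter fun r => 1 < r).card then (1:ℤ) else 0) = 0 := by
      apply if_neg
      rintro ⟨h1, _, _⟩
      omega
    obtain ⟨r, hr, hr1, hrx⟩ := exists_start_of_excess S hpos hvx.1 hvx.2
    have hA1 : (1:ℤ) ≤ (Af.card : ℤ) := by
      have : (0:ℕ) < Af.card := Finset.card_pos.2 ⟨r, Finset.mem_filter.2 ⟨hr, hr1, hrx⟩⟩
      exact_mod_cast this
    rw [hflag] at hchain
    rw [hv]
    linarith
  · have hv : 0 ≤ colV S (x 0) := by
      by_cases hm : x 0 ∈ S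
      · have hle : x 0 ≤ (S.card : ℤ) := not_lt.1 (fun hc => hvx ⟨hm, hc⟩)
        rw [colV, if_pos hle, if_pos hm]; norm_num
      · rw [colV, if_neg hm]
        split <;> norm_num
    by_cases hfl : x 0 ≤ (S.card : ℤ) ∧ (S.card : ℤ) < x (2 * t) ∧
        0 < ((colStarts S).filter fun r => 1 < r).card
    · have hflag : (if x 0 ≤ (S.card : ℤ) ∧ (S.card : ℤ) < x (2 * t) ∧
          0 < ((colStarts S).filter fun r => 1 < r).card then (1:ℤ) else 0) = 1 := if_pos hfl
      obtain ⟨r, hrmem⟩ := Finset.card_pos.1 hfl.2.2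
      rw [Finset.mem_filter] at hrmem
      have hAB : (1:ℤ) ≤ (Af.card : ℤ) + (Bf.card : ℤ) := by
        by_cases hrx : r ≤ x 0
        · have : (0:ℕ) < Af.card :=
            Finset.card_pos.2 ⟨r, Finset.mem_filter.2 ⟨hrmem.1, hrmem.2, hrx⟩⟩
          have : (1:ℤ) ≤ (Af.card : ℤ) := by exact_mod_cast this
          have hB0 : (0:ℤ) ≤ (Bf.card : ℤ) := by positivity
          linarith
        · have : (0:ℕ) < Bf.card :=
            Finset.card_pos.2 ⟨r, Finset.mem_filter.2 ⟨hrmem.1, by omega⟩⟩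
          have : (1:ℤ) ≤ (Bf.card : ℤ) := by exact_mod_cast this
          have hA0 : (0:ℤ) ≤ (Af.card : ℤ) := by positivity
          linarith
      rw [hflag] at hchain
      linarith
    · have hflag : (if x 0 ≤ (S.card : ℤ) ∧ (S.card : ℤ) < x (2 * t) ∧
          0 < ((colStarts S).filter fun r => 1 < r).card then (1:ℤ) else 0) = 0 := if_neg hfl
      rw [hflag] at hchain
      have hA0 : (0:ℤ) ≤ (Af.card : ℤ) := by positivity
      linarith

noncomputable def colEnd (S : Finset ℤ) (i : ℤ) : ℤ :=
  if h : (S.filter fun e => i ≤ e ∧ e + 1 ∉ S).Nonempty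
  then (S.filter fun e => i ≤ e ∧ e + 1 ∉ S).min' h else 0

lemma colEnd_nonempty {S : Finset ℤ} {i : ℤ} (hi : i ∈ S) :
    (S.filter fun e => i ≤ e ∧ e + 1 ∉ S).Nonempty := by
  refine ⟨S.max' ⟨i, hi⟩, Finset.mem_filter.2 ⟨S.max'_mem _, S.le_max' i hi, ?_⟩⟩
  intro h
  have := S.le_max' _ h
  omega

lemma colEnd_spec {S : Finset ℤ} {i : ℤ} (hi : i ∈ S) :
    colEnd S i ∈ S ∧ i ≤ colEnd S i ∧ colEnd S i + 1 ∉ S := by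
  rw [colEnd, dif_pos (colEnd_nonempty hi)]
  have := (S.filter fun e => i ≤ e ∧ e + 1 ∉ S).min'_mem (colEnd_nonempty hi)
  rw [Finset.mem_filter] at this
  exact ⟨this.1, this.2.1, this.2.2⟩

lemma colEnd_lt {S : Finset ℤ} {i i' : ℤ} (hi : i ∈ S) (hi' : i' ∈ S)
    (hstart : i' - 1 ∉ S) (hlt : i < i') : colEnd S i < i' := by
  set T := S.filter fun w => i ≤ w ∧ w < i' with hT
  have hne : T.Nonempty := ⟨i, Finset.mem_filter.2 ⟨hi, le_refl i, hlt⟩⟩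
  set e := T.max' hne with he
  have heT : e ∈ T := T.max'_mem hne
  rw [hT, Finset.mem_filter] at heT
  have hend : e + 1 ∉ S := by
    intro h
    by_cases hcase : e + 1 < i'
    · have : e + 1 ∈ T := Finset.mem_filter.2 ⟨h, by omega, hcase⟩
      have := T.le_max' _ this
      omega
    · have : e + 1 = i' := by omega
      rw [this] at h
      exact hstart (by simpa using (by rw [show i' - 1 = e by omega]; exact heT.1 : i' - 1 ∈ S))
  have hmem : e ∈ S.filter fun w => i ≤ w ∧ w + 1 ∉ S :=
    Finset.mem_filter.2 ⟨heT.1, heT.2.1, hend⟩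
  rw [colEnd, dif_pos (colEnd_nonempty hi)]
  have := Finset.min'_le _ e hmem
  omega

def colOf (F : Finset (ℤ × ℤ)) (j : ℤ) : Finset ℤ := (F.filter fun p => p.2 = j).image Prod.fst

lemma sum_starts_le_boundary (n : ℕ) (F : Finset (ℤ × ℤ))
    (hmemS : ∀ i j : ℤ, i ∈ colOf F j ↔ (i, j) ∈ F) :
    ∑ j ∈ Finset.Icc (1:ℤ) (n:ℤ),
        2 * (colStarts (colOf F j)).card
      ≤ horizBoundaryLen F := by
  classical
  set Sc : ℤ → Finset ℤ := fun j => colOf F j with hSc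
  set Bfin := (F.biUnion fun p =>
      ({(p, (p.1 + 1, p.2)), (p, (p.1 - 1, p.2))} : Finset ((ℤ × ℤ) × (ℤ × ℤ)))).filter
      (fun q => q.2 ∉ F) with hBfin
  have hset : {q : (ℤ × ℤ) × (ℤ × ℤ) |
      q.1.2 = q.2.2 ∧ |q.1.1 - q.2.1| = 1 ∧ q.1 ∈ F ∧ q.2 ∉ F} = ↑Bfin := by
    ext q
    constructor
    · rintro ⟨hc, habs, h1, h2⟩
      rw [Finset.mem_coe, hBfin, Finset.mem_filter, Finset.mem_biUnion]
      refine ⟨⟨q.1, h1, ?_⟩, h2⟩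
      rw [Finset.mem_insert, Finset.mem_singleton]
      rcases (abs_eq (by norm_num : (0:ℤ) ≤ 1)).1 habs with h | h
      · right
        have hq2 : q.2 = (q.1.1 - 1, q.1.2) := by
          have h1 : q.2.1 = q.1.1 - 1 := by omega
          have h2 : q.2.2 = q.1.2 := hc.symm
          exact Prod.ext_iff.2 ⟨h1, h2⟩
        rw [← hq2]
      · left
        have hq2 : q.2 = (q.1.1 + 1, q.1.2) := by
          have h1 : q.2.1 = q.1.1 + 1 := by omega
          have h2 : q.2.2 = q.1.2 := hc.symm
          exact Prod.ext_iff.2 ⟨h1, h2⟩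
        rw [← hq2]
    · intro h
      rw [Finset.mem_coe, hBfin, Finset.mem_filter, Finset.mem_biUnion] at h
      obtain ⟨⟨p, hpF, hq⟩, h2⟩ := h
      rw [Finset.mem_insert, Finset.mem_singleton] at hq
      rcases hq with hq | hq <;> subst hq
      · exact ⟨rfl, by rw [show p.1 - (p.1 + 1) = -1 by ring]; norm_num, hpF, h2⟩
      · exact ⟨rfl, by rw [show p.1 - (p.1 - 1) = 1 by ring]; norm_num, hpF, h2⟩
  have hlen : horizBoundaryLen F = Bfin.card := by
    rw [horizBoundaryLen, hset, Set.ncard_coe_finset]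
  set Dfin := (Finset.Icc (1:ℤ) (n:ℤ)).biUnion
      (fun j => (colStarts (Sc j)).image fun i => ((i, j), (i - 1, j))) with hDfin
  set Ufin := (Finset.Icc (1:ℤ) (n:ℤ)).biUnion
      (fun j => (colStarts (Sc j)).image fun i =>
        ((colEnd (Sc j) i, j), (colEnd (Sc j) i + 1, j))) with hUfin
  have hDcard : Dfin.card = ∑ j ∈ Finset.Icc (1:ℤ) (n:ℤ), (colStarts (Sc j)).card := by
    rw [hDfin, Finset.card_biUnion]
    · refine Finset.sum_congr rfl ?_
      intro j _
      apply Finset.card_image_of_injOn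
      intro i _ i' _ h
      exact congrArg (fun q => q.1.1) h
    · intro j _ j' _ hjj'
      rw [Function.onFun, Finset.disjoint_left]
      intro q hq hq'
      rw [Finset.mem_image] at hq hq'
      obtain ⟨i, _, rfl⟩ := hq
      obtain ⟨i', _, heq⟩ := hq'
      exact hjj' (congrArg (fun q => q.1.2) heq).symm
  have hUcard : Ufin.card = ∑ j ∈ Finset.Icc (1:ℤ) (n:ℤ), (colStarts (Sc j)).card := by
    rw [hUfin, Finset.card_biUnion]
    · refine Finset.sum_congr rfl ?_
      intro j _
      apply Finset.card_image_of_injOn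
      intro i hi i' hi' h
      have he : colEnd (Sc j) i = colEnd (Sc j) i' := congrArg (fun q => q.1.1) h
      by_contra hne
      rcases lt_or_gt_of_ne hne with hlt | hlt
      · have h1 := colEnd_lt (mem_colStarts.1 hi).1 (mem_colStarts.1 hi').1
          (mem_colStarts.1 hi').2 hlt
        have h2 := (colEnd_spec (mem_colStarts.1 hi').1).2.1
        omega
      · have h1 := colEnd_lt (mem_colStarts.1 hi').1 (mem_colStarts.1 hi).1
          (mem_colStarts.1 hi).2 hlt
        have h2 := (colEnd_spec (mem_colStarts.1 hi).1).2.1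
        omega
    · intro j _ j' _ hjj'
      rw [Function.onFun, Finset.disjoint_left]
      intro q hq hq'
      rw [Finset.mem_image] at hq hq'
      obtain ⟨i, _, rfl⟩ := hq
      obtain ⟨i', _, heq⟩ := hq'
      exact hjj' (congrArg (fun q => q.1.2) heq).symm
  have hDsub : Dfin ⊆ Bfin := by
    intro q hq
    rw [hDfin, Finset.mem_biUnion] at hq
    obtain ⟨j, _, hq⟩ := hq
    rw [Finset.mem_image] at hq
    obtain ⟨i, hi, rfl⟩ := hq
    have hiS := mem_colStarts.1 hi
    have hF1 : (i, j) ∈ F := (hmemS i j).1 hiS.1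
    have hF2 : (i - 1, j) ∉ F := fun h => hiS.2 ((hmemS (i - 1) j).2 h)
    rw [hBfin, Finset.mem_filter, Finset.mem_biUnion]
    refine ⟨⟨(i, j), hF1, ?_⟩, hF2⟩
    rw [Finset.mem_insert, Finset.mem_singleton]
    right; rfl
  have hUsub : Ufin ⊆ Bfin := by
    intro q hq
    rw [hUfin, Finset.mem_biUnion] at hq
    obtain ⟨j, _, hq⟩ := hq
    rw [Finset.mem_image] at hq
    obtain ⟨i, hi, rfl⟩ := hq
    have hiS := mem_colStarts.1 hi
    have hspec := colEnd_spec hiS.1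
    have hF1 : (colEnd (Sc j) i, j) ∈ F := (hmemS _ j).1 hspec.1
    have hF2 : (colEnd (Sc j) i + 1, j) ∉ F := fun h => hspec.2.2 ((hmemS _ j).2 h)
    rw [hBfin, Finset.mem_filter, Finset.mem_biUnion]
    refine ⟨⟨(colEnd (Sc j) i, j), hF1, ?_⟩, hF2⟩
    rw [Finset.mem_insert, Finset.mem_singleton]
    left; rfl
  have hDU : Disjoint Dfin Ufin := by
    rw [Finset.disjoint_left]
    intro q hq hq'
    rw [hDfin, Finset.mem_biUnion] at hq
    rw [hUfin, Finset.mem_biUnion] at hq'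
    obtain ⟨j, _, hq⟩ := hq
    obtain ⟨j', _, hq'⟩ := hq'
    rw [Finset.mem_image] at hq hq'
    obtain ⟨i, _, rfl⟩ := hq
    obtain ⟨i', _, heq⟩ := hq'
    have h1 := congrArg (fun q => q.1.1) heq
    have h2 := congrArg (fun q => q.2.1) heq
    simp only at h1 h2
    omega
  calc ∑ j ∈ Finset.Icc (1:ℤ) (n:ℤ), 2 * (colStarts (Sc j)).card
      = Dfin.card + Ufin.card := by
        rw [hDcard, hUcard, ← Finset.sum_add_distrib]
        refine Finset.sum_congr rfl ?_
        intro j _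
        ring
    _ = (Dfin ∪ Ufin).card := (Finset.card_union_of_disjoint hDU).symm
    _ ≤ Bfin.card := Finset.card_le_card (Finset.union_subset hDsub hUsub)
    _ = horizBoundaryLen F := hlen.symm

/-- Theorem 1, inequality (2): the lower bound
`L_h ≥ 2n - d_{i_{2t+1}} + Σ_{s=1}^{t} (d_{i_{2s}} - d_{i_{2s+1}}) + d_{i_{2t+1}} - 2 d_{i_1}`,
i.e. `L_h ≥ 2n - d_{i_{2t+1}} + d_{i_{2t}} - d_{i_{2t-1}} + ⋯ + d_{i_2} - 2 d_{i_1}`.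
Here `idx 0, idx 1, …, idx (2t)` play the role of `i_1 < i_2 < ⋯ < i_{2t+1}`. -/
theorem boundary_lower_bound_two (m n : ℕ) (hm : 0 < m) (hn : 0 < n)
    (F : Finset (ℤ × ℤ))
    (hF : ∀ p ∈ F, p.1 ∈ Finset.Icc (1 : ℤ) (m : ℤ) ∧ p.2 ∈ Finset.Icc (1 : ℤ) (n : ℤ))
    (hr1 : rowSum F 1 = n) (hrm : rowSum F (m : ℤ) = 0)
    (b : ℤ → ℕ)
    (hb : ∀ i : ℤ, b i = ((Finset.Icc (1 : ℤ) (n : ℤ)).filter fun j => i ≤ (colSum F j : ℤ)).card)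
    (d : ℤ → ℤ) (hd : ∀ i : ℤ, d i = (b i : ℤ) - (rowSum F i : ℤ))
    (t : ℕ) (idx : ℕ → ℤ)
    (hidx_mono : ∀ a b : ℕ, a < b → b ≤ 2 * t → idx a < idx b)
    (hidx_range : ∀ s : ℕ, s ≤ 2 * t → idx s ∈ Finset.Icc (1 : ℤ) (m : ℤ)) :
    (horizBoundaryLen F : ℤ) ≥
      2 * n - d (idx (2 * t))
        + (∑ s ∈ Finset.range t, (d (idx (2 * s + 1)) - d (idx (2 * s + 2))))
        + d (idx (2 * t)) - 2 * d (idx 0) := by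
  classical
  have hmemS : ∀ i j : ℤ, i ∈ colOf F j ↔ (i, j) ∈ F := by
    intro i j
    constructor
    · intro h
      rw [colOf, Finset.mem_image] at h
      obtain ⟨p, hp, hp1⟩ := h
      rw [Finset.mem_filter] at hp
      have hpq : p = (i, j) := Prod.ext_iff.2 ⟨hp1, hp.2⟩
      rw [← hpq]
      exact hp.1
    · intro h
      rw [colOf, Finset.mem_image]
      exact ⟨(i, j), Finset.mem_filter.2 ⟨h, rfl⟩, rfl⟩
  have hScard : ∀ j : ℤ, (colOf F j).card = colSum F j := by
    intro j
    rw [colOf, colSum]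
    apply Finset.card_image_of_injOn
    intro p hp q hq hpq
    simp only [Finset.coe_filter, Set.mem_setOf_eq] at hp hq
    exact Prod.ext_iff.2 ⟨hpq, hp.2.trans hq.2.symm⟩
  have hrowc : ∀ i : ℤ,
      rowSum F i = ((Finset.Icc (1:ℤ) (n:ℤ)).filter fun j => (i, j) ∈ F).card := by
    intro i
    rw [rowSum]
    apply Finset.card_bij (fun p _ => p.2)
    · intro p hp
      rw [Finset.mem_filter] at hp
      rw [Finset.mem_filter]
      refine ⟨(hF p hp.1).2, ?_⟩
      have hpe : p = (i, p.2) := Prod.ext_iff.2 ⟨hp.2, rfl⟩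
      rw [← hpe]
      exact hp.1
    · intro p hp q hq h
      rw [Finset.mem_filter] at hp hq
      exact Prod.ext_iff.2 ⟨hp.2.trans hq.2.symm, h⟩
    · intro j hj
      rw [Finset.mem_filter] at hj
      exact ⟨(i, j), Finset.mem_filter.2 ⟨hj.2, rfl⟩, rfl⟩
  have hdv : ∀ i : ℤ, d i = ∑ j ∈ Finset.Icc (1:ℤ) (n:ℤ), colV (colOf F j) i := by
    intro i
    rw [hd i, hb i, hrowc i]
    have hb' : ((((Finset.Icc (1:ℤ) (n:ℤ)).filter fun j => i ≤ (colSum F j : ℤ)).card : ℕ) : ℤ)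
        = ∑ j ∈ Finset.Icc (1:ℤ) (n:ℤ), (if i ≤ (colSum F j : ℤ) then (1:ℤ) else 0) := by
      rw [Finset.card_filter]
      push_cast
      rfl
    have hr' : ((((Finset.Icc (1:ℤ) (n:ℤ)).filter fun j => (i, j) ∈ F).card : ℕ) : ℤ)
        = ∑ j ∈ Finset.Icc (1:ℤ) (n:ℤ), (if (i, j) ∈ F then (1:ℤ) else 0) := by
      rw [Finset.card_filter]
      push_cast
      rfl
    rw [hb', hr', ← Finset.sum_sub_distrib]
    refine Finset.sum_congr rfl ?_
    intro j _
    have h1 : ((colOf F j).card : ℤ) = (colSum F j : ℤ) := by exact_mod_cast hScard j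
    rw [colV, h1]
    congr 1
    simp only [hmemS]
  have hfull : ∀ j ∈ Finset.Icc (1:ℤ) (n:ℤ), ((1:ℤ), j) ∈ F := by
    have hcard : ((Finset.Icc (1:ℤ) (n:ℤ)).filter fun j => ((1:ℤ), j) ∈ F)
        = Finset.Icc (1:ℤ) (n:ℤ) := by
      apply Finset.eq_of_subset_of_card_le (Finset.filter_subset _ _)
      rw [← hrowc 1, hr1, Int.card_Icc]
      omega
    intro j hj
    rw [← hcard] at hj
    exact (Finset.mem_filter.1 hj).2
  have hcol : ∀ j ∈ Finset.Icc (1:ℤ) (n:ℤ),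
      2 - 2 * colV (colOf F j) (idx 0) +
        ∑ s ∈ Finset.range t,
          (colV (colOf F j) (idx (2 * s + 1)) - colV (colOf F j) (idx (2 * s + 2))) ≤
      2 * ((colStarts (colOf F j)).card : ℤ) := by
    intro j hj
    apply col_main
    · intro i hi
      have := (hF (i, j) ((hmemS i j).1 hi)).1
      rw [Finset.mem_Icc] at this
      exact this.1
    · exact (hmemS 1 j).2 (hfull j hj)
    · have := hidx_range 0 (by omega)
      rw [Finset.mem_Icc] at this
      exact this.1
    · exact hidx_mono
  have hsum := Finset.sum_le_sum hcol
  have hL : ∑ j ∈ Finset.Icc (1:ℤ) (n:ℤ), (2 - 2 * colV (colOf F j) (idx 0) +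
        ∑ s ∈ Finset.range t,
          (colV (colOf F j) (idx (2 * s + 1)) - colV (colOf F j) (idx (2 * s + 2))))
      = 2 * (n:ℤ) + (∑ s ∈ Finset.range t, (d (idx (2 * s + 1)) - d (idx (2 * s + 2))))
        - 2 * d (idx 0) := by
    rw [Finset.sum_add_distrib, Finset.sum_sub_distrib, Finset.sum_const, Finset.sum_comm]
    have h1 : (Finset.Icc (1:ℤ) (n:ℤ)).card = n := by rw [Int.card_Icc]; omega
    have h2 : ∑ j ∈ Finset.Icc (1:ℤ) (n:ℤ), 2 * colV (colOf F j) (idx 0)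
        = 2 * d (idx 0) := by
      rw [← Finset.mul_sum, ← hdv]
    have h3 : ∀ s ∈ Finset.range t,
        ∑ j ∈ Finset.Icc (1:ℤ) (n:ℤ),
          (colV (colOf F j) (idx (2 * s + 1)) - colV (colOf F j) (idx (2 * s + 2)))
        = d (idx (2 * s + 1)) - d (idx (2 * s + 2)) := by
      intro s _
      rw [Finset.sum_sub_distrib, ← hdv, ← hdv]
    rw [h1, h2, Finset.sum_congr rfl h3]
    push_cast
    ring
  have hbd' : ∑ j ∈ Finset.Icc (1:ℤ) (n:ℤ), 2 * ((colStarts (colOf F j)).card : ℤ)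
      ≤ (horizBoundaryLen F : ℤ) := by exact_mod_cast sum_starts_le_boundary n F hmemS
  rw [ge_iff_le, show (2 * (n:ℤ) - d (idx (2 * t))
        + (∑ s ∈ Finset.range t, (d (idx (2 * s + 1)) - d (idx (2 * s + 2))))
        + d (idx (2 * t)) - 2 * d (idx 0))
      = 2 * (n:ℤ) + (∑ s ∈ Finset.range t, (d (idx (2 * s + 1)) - d (idx (2 * s + 2))))
        - 2 * d (idx 0) from by ring, ← hL]
  exact le_trans hsum hbd'
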